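/- For every non-decreasing integer partition n_1 ≤ ... ≤ n_k of n with k ≥ 5, there exists a simple graph on n vertices whose foliage partition has classes of sizes exactly n_1, ..., n_k. (Construction: take k disjoint stars, the i-th with n_i vertices, and connect their centers in a cycle.) -/

import Mathlib

namespace Foliage

variable {V : Type*}

open Classical in
noncomputable def adjNum (G : SimpleGraph V) (v u : V) : ℕ :=
  if G.Adj v u then 1 else 0

def Rel (G : SimpleGraph V) (v w : V) : Prop :=
  G.Reachable v w ∧
    ∀ u₁ u₂ : V, u₁ ≠ v → u₁ ≠ w → u₂ ≠ v → u₂ ≠ w →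
      adjNum G v u₁ * adjNum G w u₂ = adjNum G v u₂ * adjNum G w u₁

lemma adjNum_pos {G : SimpleGraph V} {v u : V} (h : G.Adj v u) : adjNum G v u = 1 := by
  simp [adjNum, h]

lemma adjNum_neg {G : SimpleGraph V} {v u : V} (h : ¬ G.Adj v u) : adjNum G v u = 0 := by
  simp [adjNum, h]

lemma rel_symm {G : SimpleGraph V} {v w : V} (h : Rel G v w) : Rel G w v := by
  obtain ⟨h1, h2⟩ := h
  refine ⟨h1.symm, fun u₁ u₂ a b c d => ?_⟩
  have := h2 u₂ u₁ d c b a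
  rw [mul_comm, this, mul_comm]

def cyc (k i j : ℕ) : Prop :=
  j = i + 1 ∨ i = j + 1 ∨ (i = 0 ∧ j = k - 1) ∨ (j = 0 ∧ i = k - 1)

lemma exists_t {k i j : ℕ} (hk : 5 ≤ k) (hi : i < k) (hj : j < k) (hij : i ≠ j) :
    ∃ t, t < k ∧ cyc k i t ∧ ¬ cyc k j t ∧ t ≠ i ∧ t ≠ j := by
  by_cases h : cyc k j (if i + 1 = k then 0 else i + 1) ∨ (if i + 1 = k then 0 else i + 1) = j
  · refine ⟨if i = 0 then k - 1 else i - 1, ?_⟩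
    unfold cyc at h ⊢; split_ifs at h ⊢ <;>
      (try simp only [false_and, false_or, or_false, and_false, true_and, and_true, true_or,
        or_true, not_true, not_false_iff] at h ⊢) <;> omega
  · refine ⟨if i + 1 = k then 0 else i + 1, ?_⟩
    unfold cyc at h ⊢; split_ifs at h ⊢ <;>
      (try simp only [false_and, false_or, or_false, and_false, true_and, and_true, true_or,
        or_true, not_true, not_false_iff] at h ⊢) <;> omega

variable {k : ℕ} {m : Fin k → ℕ}

def A (m : Fin k → ℕ) (x y : Σ i : Fin k, Fin (m i)) : Prop :=
  (x.1.val = y.1.val ∧ ((x.2.val = 0 ∧ y.2.val ≠ 0) ∨ (x.2.val ≠ 0 ∧ y.2.val = 0))) ∨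
  (x.2.val = 0 ∧ y.2.val = 0 ∧ cyc k x.1.val y.1.val)

lemma sigma_eq {x y : Σ i : Fin k, Fin (m i)} (h1 : x.1.val = y.1.val)
    (h2 : x.2.val = y.2.val) : x = y := by
  obtain ⟨i, a⟩ := x; obtain ⟨j, b⟩ := y
  simp only at h1 h2
  obtain rfl : i = j := Fin.ext h1
  exact congrArg (Sigma.mk i) (Fin.ext h2)

def fiberEquiv (m : Fin k → ℕ) (i : Fin k) :
    {x : Σ j : Fin k, Fin (m j) // x.1 = i} ≃ Fin (m i) where
  toFun x := Fin.cast (congrArg m x.2) x.1.2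
  invFun a := ⟨⟨i, a⟩, rfl⟩
  left_inv := by rintro ⟨⟨j, a⟩, rfl⟩; rfl
  right_inv a := rfl

/-- Every non-decreasing integer partition `n₁ ≤ … ≤ n_k` of `n` with at least
five parts is realized as the foliage partition of some graph on `n` vertices. -/
theorem partition_realizable (n k : ℕ) (hk : 5 ≤ k)
    (m : Fin k → ℕ) (hpos : ∀ i, 1 ≤ m i) (hmono : Monotone m)
    (hsum : ∑ i, m i = n) :
    ∃ G : SimpleGraph (Fin n), G.Connected ∧
      ∃ f : Fin n → Fin k,
        (∀ v w : Fin n, Rel G v w ↔ f v = f w) ∧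
        ∀ i : Fin k, Nat.card {v : Fin n // f v = i} = m i := by
  classical
  have hk0 : 0 < k := by omega
  have hkn : k ≤ n := by
    calc k = ∑ _i : Fin k, 1 := by simp
    _ ≤ ∑ i, m i := Finset.sum_le_sum fun i _ => hpos i
    _ = n := hsum
  have hn0 : 0 < n := by omega
  have hcard : Fintype.card (Σ i : Fin k, Fin (m i)) = n := by
    simp [Fintype.card_sigma, hsum]
  obtain ⟨e⟩ : Nonempty ((Σ i : Fin k, Fin (m i)) ≃ Fin n) :=
    ⟨Fintype.equivFinOfCardEq hcard⟩
  have hsymm : ∀ x y : Σ i : Fin k, Fin (m i), A m x y → A m y x := by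
    intro x y h; unfold A cyc at h ⊢; omega
  have hloop : ∀ x : Σ i : Fin k, Fin (m i), ¬ A m x x := by
    intro x h
    have hx := x.1.isLt
    unfold A cyc at h; omega
  set G : SimpleGraph (Fin n) :=
    { Adj := fun v w => A m (e.symm v) (e.symm w)
      symm := ⟨fun v w h => hsymm _ _ h⟩
      loopless := ⟨fun v h => hloop _ h⟩ } with hG
  have hGA : ∀ p q : Fin n, G.Adj p q ↔ A m (e.symm p) (e.symm q) := fun _ _ => Iff.rfl
  -- adjacency between centers along the cycle
  have hcadj : ∀ i j : Fin k, cyc k i.val j.val →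
      G.Adj (e ⟨i, ⟨0, hpos i⟩⟩) (e ⟨j, ⟨0, hpos j⟩⟩) := by
    intro i j h
    rw [hGA]
    simp only [Equiv.symm_apply_apply]
    exact Or.inr ⟨rfl, rfl, h⟩
  -- reachability to the 0-th center
  have hc0 : ∀ (N : ℕ) (i : Fin k), i.val ≤ N →
      G.Reachable (e ⟨i, ⟨0, hpos i⟩⟩) (e ⟨⟨0, hk0⟩, ⟨0, hpos _⟩⟩) := by
    intro N
    induction N with
    | zero =>
      intro i hi
      have : i = ⟨0, hk0⟩ := Fin.ext (show i.val = 0 by omega)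
      rw [this]
    | succ N ih =>
      intro i hi
      by_cases h : i.val ≤ N
      · exact ih i h
      · have hival : i.val = N + 1 := by omega
        have hlt : N < k := by have := i.isLt; omega
        have hadj : G.Adj (e ⟨i, ⟨0, hpos i⟩⟩) (e ⟨⟨N, hlt⟩, ⟨0, hpos _⟩⟩) :=
          hcadj i ⟨N, hlt⟩ (by unfold cyc; simp only; omega)
        exact hadj.reachable.trans (ih ⟨N, hlt⟩ le_rfl)
  have hreach : ∀ v : Fin n, G.Reachable v (e ⟨⟨0, hk0⟩, ⟨0, hpos _⟩⟩) := by
    intro v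
    obtain ⟨x, rfl⟩ := e.surjective v
    by_cases h : x.2.val = 0
    · have hx : x = ⟨x.1, ⟨0, hpos x.1⟩⟩ := sigma_eq rfl h
      rw [hx]
      exact hc0 x.1.val x.1 le_rfl
    · have hadj : G.Adj (e x) (e ⟨x.1, ⟨0, hpos x.1⟩⟩) := by
        rw [hGA]
        simp only [Equiv.symm_apply_apply]
        exact Or.inl ⟨rfl, Or.inr ⟨h, rfl⟩⟩
      exact hadj.reachable.trans (hc0 x.1.val x.1 le_rfl)
  have hconn : G.Connected := by
    rw [SimpleGraph.connected_iff]
    exact ⟨fun v w => (hreach v).trans (hreach w).symm, ⟨⟨0, hn0⟩⟩⟩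
  -- helper: turn ≠ on images into ≠ on sigma components
  have hne_of : ∀ (z : Σ i : Fin k, Fin (m i)) (v : Fin n), z ≠ e.symm v → e z ≠ v := by
    intro z v h hh
    exact h (by rw [← hh, Equiv.symm_apply_apply])
  have hne_fst : ∀ {x y : Σ i : Fin k, Fin (m i)}, x.1.val ≠ y.1.val → x ≠ y := by
    intro x y h hh; exact h (by rw [hh])
  have hne_snd : ∀ {x y : Σ i : Fin k, Fin (m i)}, x.2.val ≠ y.2.val → x ≠ y := by
    intro x y h hh; exact h (by rw [hh])
  -- the three "not related" key facts
  have key1 : ∀ v w : Fin n, (e.symm v).2.val ≠ 0 → (e.symm w).2.val ≠ 0 →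
      (e.symm v).1.val ≠ (e.symm w).1.val → ¬ Rel G v w := by
    intro v w hx hy hne hrel
    obtain ⟨-, hcond⟩ := hrel
    have hA1 : G.Adj v (e ⟨(e.symm v).1, ⟨0, hpos _⟩⟩) := by
      rw [hGA]; simp only [Equiv.symm_apply_apply]
      exact Or.inl ⟨rfl, Or.inr ⟨hx, rfl⟩⟩
    have hA2 : G.Adj w (e ⟨(e.symm w).1, ⟨0, hpos _⟩⟩) := by
      rw [hGA]; simp only [Equiv.symm_apply_apply]
      exact Or.inl ⟨rfl, Or.inr ⟨hy, rfl⟩⟩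
    have hA3 : ¬ G.Adj v (e ⟨(e.symm w).1, ⟨0, hpos _⟩⟩) := by
      rw [hGA]; simp only [Equiv.symm_apply_apply]
      unfold A cyc; simp only; omega
    have hc := hcond (e ⟨(e.symm v).1, ⟨0, hpos _⟩⟩) (e ⟨(e.symm w).1, ⟨0, hpos _⟩⟩)
      (hne_of _ _ (hne_snd (by simpa using fun hh => hx hh.symm)))
      (hne_of _ _ (hne_fst (by simpa using hne)))
      (hne_of _ _ (hne_fst (by simpa using hne.symm)))
      (hne_of _ _ (hne_snd (by simpa using fun hh => hy hh.symm)))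
    rw [adjNum_pos hA1, adjNum_pos hA2, adjNum_neg hA3] at hc
    simp at hc
  have key2 : ∀ v w : Fin n, (e.symm v).2.val = 0 → (e.symm w).2.val ≠ 0 →
      (e.symm v).1.val ≠ (e.symm w).1.val → ¬ Rel G v w := by
    intro v w hx hy hne hrel
    obtain ⟨-, hcond⟩ := hrel
    obtain ⟨t, htk, htc, htnc, hti, htj⟩ :=
      exists_t hk (e.symm v).1.isLt (e.symm w).1.isLt hne
    have hA1 : G.Adj v (e ⟨⟨t, htk⟩, ⟨0, hpos _⟩⟩) := by
      rw [hGA]; simp only [Equiv.symm_apply_apply]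
      exact Or.inr ⟨hx, rfl, htc⟩
    have hA2 : G.Adj w (e ⟨(e.symm w).1, ⟨0, hpos _⟩⟩) := by
      rw [hGA]; simp only [Equiv.symm_apply_apply]
      exact Or.inl ⟨rfl, Or.inr ⟨hy, rfl⟩⟩
    have hA4 : ¬ G.Adj w (e ⟨⟨t, htk⟩, ⟨0, hpos _⟩⟩) := by
      rw [hGA]; simp only [Equiv.symm_apply_apply]
      unfold cyc at htnc
      unfold A cyc; simp only; omega
    have hc := hcond (e ⟨⟨t, htk⟩, ⟨0, hpos _⟩⟩) (e ⟨(e.symm w).1, ⟨0, hpos _⟩⟩)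
      (hne_of _ _ (hne_fst (by simpa using hti)))
      (hne_of _ _ (hne_fst (by simpa using htj)))
      (hne_of _ _ (hne_fst (by simpa using hne.symm)))
      (hne_of _ _ (hne_snd (by simpa using fun hh => hy hh.symm)))
    rw [adjNum_pos hA1, adjNum_pos hA2, adjNum_neg hA4, mul_zero] at hc
    simp at hc
  have key3 : ∀ v w : Fin n, (e.symm v).2.val = 0 → (e.symm w).2.val = 0 →
      (e.symm v).1.val ≠ (e.symm w).1.val → ¬ Rel G v w := by
    intro v w hx hy hne hrel
    obtain ⟨-, hcond⟩ := hrel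
    obtain ⟨t, htk, htc, htnc, hti, htj⟩ :=
      exists_t hk (e.symm v).1.isLt (e.symm w).1.isLt hne
    obtain ⟨s, hsk, hsc, hsnc, hsj, hsi⟩ :=
      exists_t hk (e.symm w).1.isLt (e.symm v).1.isLt hne.symm
    have hA1 : G.Adj v (e ⟨⟨t, htk⟩, ⟨0, hpos _⟩⟩) := by
      rw [hGA]; simp only [Equiv.symm_apply_apply]
      exact Or.inr ⟨hx, rfl, htc⟩
    have hA2 : G.Adj w (e ⟨⟨s, hsk⟩, ⟨0, hpos _⟩⟩) := by
      rw [hGA]; simp only [Equiv.symm_apply_apply]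
      exact Or.inr ⟨hy, rfl, hsc⟩
    have hA4 : ¬ G.Adj w (e ⟨⟨t, htk⟩, ⟨0, hpos _⟩⟩) := by
      rw [hGA]; simp only [Equiv.symm_apply_apply]
      unfold cyc at htnc
      unfold A cyc; simp only; omega
    have hc := hcond (e ⟨⟨t, htk⟩, ⟨0, hpos _⟩⟩) (e ⟨⟨s, hsk⟩, ⟨0, hpos _⟩⟩)
      (hne_of _ _ (hne_fst (by simpa using hti)))
      (hne_of _ _ (hne_fst (by simpa using htj)))
      (hne_of _ _ (hne_fst (by simpa using hsi)))
      (hne_of _ _ (hne_fst (by simpa using hsj)))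
    rw [adjNum_pos hA1, adjNum_pos hA2, adjNum_neg hA4, mul_zero] at hc
    simp at hc
  refine ⟨G, hconn, fun v => (e.symm v).1, fun v w => ?_, fun i => ?_⟩
  · constructor
    · -- Rel → same class
      intro hrel
      by_contra hfne
      have hne : (e.symm v).1.val ≠ (e.symm w).1.val := fun h => hfne (Fin.ext h)
      by_cases hx : (e.symm v).2.val = 0 <;> by_cases hy : (e.symm w).2.val = 0
      · exact key3 v w hx hy hne hrel
      · exact key2 v w hx hy hne hrel
      · exact key2 w v hy hx hne.symm (rel_symm hrel)
      · exact key1 v w hx hy hne hrel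
    · -- same class → Rel
      intro hfw
      have hval : (e.symm v).1.val = (e.symm w).1.val := congrArg Fin.val hfw
      refine ⟨hconn.preconnected v w, ?_⟩
      intro u₁ u₂ h1v h1w h2v h2w
      by_cases hx : (e.symm v).2.val = 0 <;> by_cases hy : (e.symm w).2.val = 0
      · -- both centers: v = w
        have : e.symm v = e.symm w := sigma_eq hval (hx.trans hy.symm)
        have hvw : v = w := e.symm.injective this
        subst hvw
        exact mul_comm _ _
      · -- v center, w leaf: w's only neighbour is v
        have hw0 : ∀ u : Fin n, u ≠ v → adjNum G w u = 0 := by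
          intro u hu
          refine adjNum_neg fun hA => hu ?_
          rw [hGA] at hA
          have h1 : (e.symm u).1.val = (e.symm v).1.val := by
            unfold A cyc at hA; omega
          have h2 : (e.symm u).2.val = (e.symm v).2.val := by
            unfold A cyc at hA; omega
          exact e.symm.injective (sigma_eq h1 h2)
        rw [hw0 u₁ h1v, hw0 u₂ h2v, mul_zero, mul_zero]
      · -- v leaf, w center: v's only neighbour is w
        have hv0 : ∀ u : Fin n, u ≠ w → adjNum G v u = 0 := by
          intro u hu
          refine adjNum_neg fun hA => hu ?_
          rw [hGA] at hA
          have h1 : (e.symm u).1.val = (e.symm w).1.val := by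
            unfold A cyc at hA; omega
          have h2 : (e.symm u).2.val = (e.symm w).2.val := by
            unfold A cyc at hA; omega
          exact e.symm.injective (sigma_eq h1 h2)
        rw [hv0 u₁ h1w, hv0 u₂ h2w, zero_mul, zero_mul]
      · -- both leaves: same neighbourhoods
        have hsame : ∀ u : Fin n, adjNum G v u = adjNum G w u := by
          intro u
          have hiff : G.Adj v u ↔ G.Adj w u := by
            rw [hGA, hGA]
            unfold A cyc
            omega
          simp only [adjNum]
          exact if_congr hiff rfl rfl
        rw [hsame u₁, hsame u₂]
        exact mul_comm _ _
  · -- cardinality of the classes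
    have hequiv : {v : Fin n // (e.symm v).1 = i} ≃ Fin (m i) :=
      (Equiv.subtypeEquiv e.symm fun v => Iff.rfl).trans (fiberEquiv m i)
    exact Nat.card_eq_of_equiv_fin hequiv

end Foliage
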